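/- Let n ≥ 1 be an integer and z > 0, q > 0, c > 0 real numbers. Then the Mellin–Barnes integral representation holds: F_{n,z}(q) = (1/(2π)) ∫_{−∞}^{∞} q^{−(c+it)} · z^{(n+1)(c+it)} · Γ(c+it)^{n+1} dt, where the integrand is integrable on ℝ, Γ is the complex Gamma function, and powers of the positive reals q and z are taken with the real logarithm. -/

import Mathlib

open MeasureTheory

/-- Givental's mirror oscillatory integral of `ℙⁿ` over the positive real thimble. -/
noncomputable def mirrorOscIntegral (n : ℕ) (z q : ℝ) : ℝ :=
  ∫ x in Set.univ.pi fun _ : Fin n => Set.Ioi (0 : ℝ),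
    Real.exp (-(∑ i, x i + q / ∏ i, x i) / z) / ∏ i, x i

/-- The Mellin–Barnes integrand `q^{−(c+it)} z^{(n+1)(c+it)} Γ(c+it)^{n+1}`,
with powers of the positive reals `q`, `z` taken via the real logarithm. -/
noncomputable def mellinBarnesIntegrand (n : ℕ) (z q c : ℝ) (t : ℝ) : ℂ :=
  Complex.exp (-((c : ℂ) + t * Complex.I) * Real.log q) *
    Complex.exp (((n : ℂ) + 1) * ((c : ℂ) + t * Complex.I) * Real.log z) *
    Complex.Gamma ((c : ℂ) + t * Complex.I) ^ (n + 1)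

namespace MBaux

open MeasureTheory Set


lemma indicator_pi_prod {n : ℕ} {M : Type*} [CommMonoidWithZero M] (s : Set ℝ)
    (f : Fin n → ℝ → M) (x : Fin n → ℝ) :
    (Set.univ.pi fun _ : Fin n => s).indicator (fun y => ∏ i, f i (y i)) x
      = ∏ i, s.indicator (f i) (x i) := by
  by_cases hx : x ∈ Set.univ.pi fun _ : Fin n => s
  · rw [Set.indicator_of_mem hx]
    exact Finset.prod_congr rfl fun i _ =>
      (Set.indicator_of_mem (hx i (Set.mem_univ i)) _).symm
  · rw [Set.indicator_of_notMem hx]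
    rw [Set.mem_univ_pi] at hx
    push_neg at hx
    obtain ⟨i, hi⟩ := hx
    exact (Finset.prod_eq_zero (Finset.mem_univ i) (Set.indicator_of_notMem hi _)).symm

variable {𝕜 : Type*} [RCLike 𝕜]

lemma integrableOn_pi_prod {n : ℕ} (f : ℝ → 𝕜) (hf : IntegrableOn f (Ioi (0:ℝ))) :
    IntegrableOn (fun x : Fin n → ℝ => ∏ i, f (x i))
      (Set.univ.pi fun _ : Fin n => Ioi (0:ℝ)) := by
  have hmeas : MeasurableSet (Set.univ.pi fun _ : Fin n => Ioi (0:ℝ)) :=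
    MeasurableSet.univ_pi fun _ => measurableSet_Ioi
  rw [← integrable_indicator_iff hmeas]
  rw [show ((Set.univ.pi fun _ : Fin n => Ioi (0:ℝ)).indicator fun y => ∏ i, f (y i))
      = fun x => ∏ i : Fin n, (Ioi (0:ℝ)).indicator f (x i) from
    funext (indicator_pi_prod _ _)]
  exact Integrable.fintype_prod fun _ => (integrable_indicator_iff measurableSet_Ioi).mpr hf

lemma setIntegral_pi_prod {n : ℕ} (f : ℝ → 𝕜) :
    ∫ x : Fin n → ℝ in Set.univ.pi fun _ => Ioi (0:ℝ), ∏ i, f (x i)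
      = (∫ t in Ioi (0:ℝ), f t) ^ n := by
  rw [← integral_indicator (MeasurableSet.univ_pi fun _ => measurableSet_Ioi)]
  rw [show ((Set.univ.pi fun _ : Fin n => Ioi (0:ℝ)).indicator fun y => ∏ i, f (y i))
      = fun x => ∏ i : Fin n, (Ioi (0:ℝ)).indicator f (x i) from
    funext (indicator_pi_prod _ _)]
  beta_reduce
  rw [MeasureTheory.integral_fintype_prod_volume_eq_pow (ι := Fin n) ((Ioi (0:ℝ)).indicator f),
    integral_indicator measurableSet_Ioi, Fintype.card_fin]



lemma prod_ofReal_cpow {ι : Type*} (t : Finset ι) (x : ι → ℝ) (hx : ∀ i ∈ t, 0 ≤ x i) (s : ℂ) :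
    ((∏ i ∈ t, x i : ℝ) : ℂ) ^ s = ∏ i ∈ t, ((x i : ℝ) : ℂ) ^ s := by
  induction t using Finset.cons_induction with
  | empty => simp
  | cons a t ha ih =>
    rw [Finset.prod_cons, Finset.prod_cons, Complex.ofReal_mul,
      Complex.mul_cpow_ofReal_nonneg (hx a (Finset.mem_cons_self a t))
        (Finset.prod_nonneg fun i hi => hx i (Finset.mem_cons_of_mem hi)),
      ih fun i hi => hx i (Finset.mem_cons_of_mem hi)]

lemma integrableOn_cpow_mul_exp_neg_mul {s : ℂ} (hs : 0 < s.re) {r : ℝ} (hr : 0 < r) :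
    IntegrableOn (fun q : ℝ => (q : ℂ) ^ (s - 1) * Complex.exp (-((r : ℂ) * (q : ℂ)))) (Ioi 0) := by
  have h1 : IntegrableOn
      (fun q : ℝ => Complex.exp (-((r * q : ℝ) : ℂ)) * ((r * q : ℝ) : ℂ) ^ (s - 1)) (Ioi 0) := by
    have := (integrableOn_Ioi_comp_mul_left_iff
      (fun x : ℝ => Complex.exp (-(x : ℂ)) * (x : ℂ) ^ (s - 1)) 0 hr).mpr
      (by simpa [mul_zero] using Complex.GammaIntegral_convergent hs)
    simpa [mul_zero] using this
  have h2 := h1.const_mul (((r : ℝ) : ℂ) ^ ((1 : ℂ) - s))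
  refine IntegrableOn.congr_fun h2 (fun q hq => ?_) measurableSet_Ioi
  have hq : (0 : ℝ) < q := hq
  have hrne : ((r : ℝ) : ℂ) ≠ 0 := Complex.ofReal_ne_zero.mpr hr.ne'
  push_cast
  rw [Complex.mul_cpow_ofReal_nonneg hr.le hq.le]
  rw [show ((r:ℂ) ^ ((1:ℂ) - s) * (Complex.exp (-((r:ℂ) * (q:ℂ))) *
      ((r:ℂ) ^ (s - 1) * (q:ℂ) ^ (s - 1))))
    = ((r:ℂ) ^ ((1:ℂ) - s) * (r:ℂ) ^ (s - 1)) *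
      ((q:ℂ) ^ (s - 1) * Complex.exp (-((r:ℂ) * (q:ℂ)))) by ring,
    ← Complex.cpow_add _ _ hrne]
  norm_num

lemma integrableOn_rpow_mul_exp_neg_mul {σ : ℝ} (hσ : 0 < σ) {r : ℝ} (hr : 0 < r) :
    IntegrableOn (fun q : ℝ => q ^ (σ - 1) * Real.exp (-(r * q))) (Ioi 0) := by
  have h1 : IntegrableOn (fun q : ℝ => Real.exp (-(r * q)) * (r * q) ^ (σ - 1)) (Ioi 0) := by
    have := (integrableOn_Ioi_comp_mul_left_iff
      (fun x : ℝ => Real.exp (-x) * x ^ (σ - 1)) 0 hr).mpr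
      (by simpa [mul_zero] using Real.GammaIntegral_convergent hσ)
    simpa [mul_zero] using this
  have h2 := h1.const_mul (r ^ ((1 : ℝ) - σ))
  refine IntegrableOn.congr_fun h2 (fun q hq => ?_) measurableSet_Ioi
  have hq : (0 : ℝ) < q := hq
  rw [Real.mul_rpow hr.le hq.le]
  rw [show (r ^ ((1:ℝ) - σ) * (Real.exp (-(r * q)) * (r ^ (σ - 1) * q ^ (σ - 1))))
    = (r ^ ((1:ℝ) - σ) * r ^ (σ - 1)) * (q ^ (σ - 1) * Real.exp (-(r * q))) by ring]
  rw [← Real.rpow_add hr]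
  norm_num

lemma norm_Gamma_le {σ : ℝ} (hσ : 0 < σ) (t : ℝ) :
    ‖Complex.Gamma (σ + t * Complex.I)‖ ≤ Real.Gamma σ := by
  have hre : ((σ : ℂ) + t * Complex.I).re = σ := by simp
  rw [Complex.Gamma_eq_integral (by rw [hre]; exact hσ), Real.Gamma_eq_integral hσ,
    Complex.GammaIntegral]
  refine (norm_integral_le_integral_norm _).trans_eq ?_
  refine setIntegral_congr_fun measurableSet_Ioi fun x hx => ?_
  have hx : (0 : ℝ) < x := hx
  rw [norm_mul, Complex.norm_cpow_eq_rpow_re_of_pos hx]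
  simp [hre, Real.abs_exp, Complex.norm_exp]

lemma norm_Gamma_decay {c : ℝ} (hc : 0 < c) {t : ℝ} (ht : 1 ≤ |t|) :
    ‖Complex.Gamma ((c : ℂ) + t * Complex.I)‖ ≤ Real.Gamma (c + 2) / t ^ 2 := by
  set s : ℂ := (c : ℂ) + t * Complex.I with hs
  have hsre : s.re = c := by simp [hs]
  have hsim : s.im = t := by simp [hs]
  have hs0 : s ≠ 0 := by
    intro h; rw [h] at hsre; simp at hsre; exact hc.ne' hsre.symm
  have hs10 : s + 1 ≠ 0 := by
    intro h
    have : (s + 1).re = 0 := by rw [h]; simp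
    simp [hsre] at this
    nlinarith [hsre, this]
  have key : Complex.Gamma (s + 2) = (s + 1) * s * Complex.Gamma s := by
    have h1 : Complex.Gamma (s + 1) = s * Complex.Gamma s := Complex.Gamma_add_one s hs0
    have h2 : Complex.Gamma (s + 1 + 1) = (s + 1) * Complex.Gamma (s + 1) :=
      Complex.Gamma_add_one (s + 1) hs10
    rw [show s + 2 = s + 1 + 1 by ring, h2, h1]; ring
  have hnorm : ‖Complex.Gamma (s + 2)‖ = ‖s + 1‖ * ‖s‖ * ‖Complex.Gamma s‖ := by
    rw [key, norm_mul, norm_mul]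
  have hb : ‖Complex.Gamma (s + 2)‖ ≤ Real.Gamma (c + 2) := by
    have : s + 2 = ((c + 2 : ℝ) : ℂ) + t * Complex.I := by push_cast [hs]; ring
    rw [this]
    exact norm_Gamma_le (by linarith) t
  have habs : |t| ≤ ‖s‖ := by
    simpa [hsim] using Complex.abs_im_le_norm s
  have habs1 : |t| ≤ ‖s + 1‖ := by
    have : (s + 1).im = t := by simp [hsim]
    simpa [this] using Complex.abs_im_le_norm (s + 1)
  have ht0 : (0:ℝ) < |t| := lt_of_lt_of_le one_pos ht
  have hprod : t ^ 2 ≤ ‖s + 1‖ * ‖s‖ := by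
    calc t ^ 2 = |t| * |t| := by rw [← sq_abs t]; ring
    _ ≤ ‖s + 1‖ * ‖s‖ := mul_le_mul habs1 habs ht0.le (norm_nonneg _)
  have hG : ‖Complex.Gamma s‖ * t ^ 2 ≤ Real.Gamma (c + 2) := by
    calc ‖Complex.Gamma s‖ * t ^ 2 ≤ ‖Complex.Gamma s‖ * (‖s + 1‖ * ‖s‖) := by
          exact mul_le_mul_of_nonneg_left hprod (norm_nonneg _)
    _ = ‖Complex.Gamma (s + 2)‖ := by rw [hnorm]; ring
    _ ≤ Real.Gamma (c + 2) := hb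
  have htne : t ≠ 0 := by intro h; rw [h] at ht; simp at ht; linarith
  have ht2 : (0:ℝ) < t ^ 2 := by positivity
  rw [le_div_iff₀ ht2]
  exact hG

lemma gamma_pow_bound {c : ℝ} (hc : 0 < c) {n : ℕ} (hn : 1 ≤ n) :
    ∃ K : ℝ, 0 ≤ K ∧ ∀ t : ℝ,
      ‖Complex.Gamma ((c : ℂ) + t * Complex.I)‖ ^ (n + 1) ≤ K * (1 + t ^ 2)⁻¹ := by
  set A := Real.Gamma c with hA
  set B := Real.Gamma (c + 2) with hB
  have hA0 : 0 < A := Real.Gamma_pos_of_pos hc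
  have hB0 : 0 < B := Real.Gamma_pos_of_pos (by linarith)
  refine ⟨2 * A ^ (n + 1) + 2 * A ^ (n - 1) * B ^ 2, by positivity, fun t => ?_⟩
  set G := ‖Complex.Gamma ((c : ℂ) + t * Complex.I)‖ with hG
  have hG0 : 0 ≤ G := norm_nonneg _
  have hGA : G ≤ A := norm_Gamma_le hc t
  have h1t : (0:ℝ) < 1 + t ^ 2 := by positivity
  have hKnn : (0:ℝ) ≤ 2 * A ^ (n - 1) * B ^ 2 := by positivity
  rcases le_or_gt (|t|) 1 with h | h
  · have ht2 : t ^ 2 ≤ 1 := by rw [← sq_abs t]; nlinarith [abs_nonneg t]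
    have e1 : G ^ (n + 1) ≤ A ^ (n + 1) := pow_le_pow_left₀ hG0 hGA _
    have e2 : A ^ (n + 1) ≤ (2 * A ^ (n + 1) + 2 * A ^ (n - 1) * B ^ 2) * 2⁻¹ := by
      nlinarith [mul_nonneg (pow_nonneg hA0.le (n - 1)) (sq_nonneg B)]
    have e3 : (2 * A ^ (n + 1) + 2 * A ^ (n - 1) * B ^ 2) * 2⁻¹
        ≤ (2 * A ^ (n + 1) + 2 * A ^ (n - 1) * B ^ 2) * (1 + t ^ 2)⁻¹ := by
      have : (2:ℝ)⁻¹ ≤ (1 + t ^ 2)⁻¹ := by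
        apply inv_anti₀ h1t; linarith
      exact mul_le_mul_of_nonneg_left this (by positivity)
    linarith
  · have htne : t ≠ 0 := by intro h0; rw [h0] at h; simp at h; linarith
    have ht2a : 1 ≤ t ^ 2 := by rw [← sq_abs t]; nlinarith [abs_nonneg t]
    have ht4 : (0:ℝ) < t ^ 4 := by positivity
    have hdec : G ≤ B / t ^ 2 := norm_Gamma_decay hc h.le
    have e1 : G ^ (n + 1) = G ^ (n - 1) * G ^ 2 := by
      rw [← pow_add]; congr 1; omega
    have e2 : G ^ 2 ≤ B ^ 2 / t ^ 4 := by
      calc G ^ 2 ≤ (B / t ^ 2) ^ 2 := pow_le_pow_left₀ hG0 hdec 2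
      _ = B ^ 2 / t ^ 4 := by rw [div_pow]; ring_nf
    have e3 : G ^ (n + 1) ≤ A ^ (n - 1) * (B ^ 2 / t ^ 4) := by
      rw [e1]
      exact mul_le_mul (pow_le_pow_left₀ hG0 hGA _) e2 (by positivity) (by positivity)
    have e4 : A ^ (n - 1) * (B ^ 2 / t ^ 4)
        ≤ 2 * A ^ (n - 1) * B ^ 2 * (1 + t ^ 2)⁻¹ := by
      rw [mul_div_assoc', div_le_iff₀ ht4, inv_eq_one_div, mul_one_div, div_mul_eq_mul_div,
        le_div_iff₀ h1t]
      have h5 : 1 + t ^ 2 ≤ 2 * t ^ 4 := by nlinarith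
      nlinarith [mul_nonneg (pow_nonneg hA0.le (n - 1)) (sq_nonneg B)]
    have e5 : (0:ℝ) ≤ 2 * A ^ (n + 1) * (1 + t ^ 2)⁻¹ := by positivity
    nlinarith


lemma continuous_vertical_Gamma {c : ℝ} (hc : 0 < c) :
    Continuous fun t : ℝ => Complex.Gamma ((c : ℂ) + t * Complex.I) := by
  rw [continuous_iff_continuousAt]
  intro t
  have h1 : ContinuousAt Complex.Gamma ((c : ℂ) + t * Complex.I) := by
    refine (Complex.differentiableAt_Gamma _ fun m => ?_).continuousAt
    intro h
    have := congrArg Complex.re h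
    simp at this
    have : (0:ℝ) ≤ (m : ℝ) := Nat.cast_nonneg m
    linarith
  have h2 : ContinuousAt (fun t : ℝ => (c : ℂ) + t * Complex.I) t := by fun_prop
  exact ContinuousAt.comp (f := fun t : ℝ => (c : ℂ) + t * Complex.I) h1 h2

lemma integrable_gamma_kernel {c : ℝ} (hc : 0 < c) {n : ℕ} (hn : 1 ≤ n) (g : ℝ → ℂ)
    (hg : Continuous g) {M : ℝ} (hgb : ∀ t, ‖g t‖ ≤ M) :
    Integrable (fun t : ℝ => g t * Complex.Gamma ((c : ℂ) + t * Complex.I) ^ (n + 1)) := by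
  obtain ⟨K, hK0, hK⟩ := gamma_pow_bound hc hn
  have hM0 : 0 ≤ M := (norm_nonneg _).trans (hgb 0)
  refine Integrable.mono' ((integrable_inv_one_add_sq).const_mul (M * K))
    ((hg.mul ((continuous_vertical_Gamma hc).pow _)).aestronglyMeasurable)
    (Filter.Eventually.of_forall fun t => ?_)
  rw [norm_mul, norm_pow]
  calc ‖g t‖ * ‖Complex.Gamma ((c : ℂ) + t * Complex.I)‖ ^ (n + 1)
      ≤ M * (K * (1 + t ^ 2)⁻¹) :=
        mul_le_mul (hgb t) (hK t) (by positivity) hM0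
    _ = M * K * (1 + t ^ 2)⁻¹ := by ring



lemma setIntegral_cpow_mul_exp_neg_mul {s : ℂ} (hs : 0 < s.re) {r : ℝ} (hr : 0 < r) :
    ∫ q in Ioi (0:ℝ), (q : ℂ) ^ (s - 1) * Complex.exp (-((r : ℂ) * (q : ℂ)))
      = ((r⁻¹ : ℝ) : ℂ) ^ s * Complex.Gamma s := by
  have h := Complex.integral_cpow_mul_exp_neg_mul_Ioi hs hr
  rw [show ((r⁻¹ : ℝ) : ℂ) = 1 / (r : ℂ) by push_cast; rw [one_div]]
  rw [← h]

lemma setIntegral_rpow_mul_exp_neg_mul {σ : ℝ} (hσ : 0 < σ) {r : ℝ} (hr : 0 < r) :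
    ∫ q in Ioi (0:ℝ), q ^ (σ - 1) * Real.exp (-(r * q)) = (r⁻¹) ^ σ * Real.Gamma σ := by
  have h := Real.integral_rpow_mul_exp_neg_mul_Ioi hσ hr
  rw [inv_eq_one_div]
  rw [← h]


theorem mellin_mirror (n : ℕ) {z : ℝ} (hz : 0 < z) {s : ℂ} (hs : 0 < s.re) :
    MellinConvergent (fun q : ℝ => ((mirrorOscIntegral n z q : ℝ) : ℂ)) s ∧
    mellin (fun q : ℝ => ((mirrorOscIntegral n z q : ℝ) : ℂ)) s
      = Complex.exp (((n : ℂ) + 1) * s * (Real.log z : ℂ)) * Complex.Gamma s ^ (n + 1) := by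
  have hσ : 0 < s.re := hs
  set σ := s.re with hσdef
  set P : Set (Fin n → ℝ) := Set.univ.pi fun _ => Ioi (0:ℝ) with hPdef
  have hPm : MeasurableSet P := MeasurableSet.univ_pi fun _ => measurableSet_Ioi
  set μP : Measure (Fin n → ℝ) := volume.restrict P with hμP
  set μq : Measure ℝ := volume.restrict (Ioi (0:ℝ)) with hμq
  set Ψ : (Fin n → ℝ) × ℝ → ℂ := fun p =>
    (p.2 : ℂ) ^ (s - 1) *
      ((Real.exp (-(∑ i, p.1 i + p.2 / ∏ i, p.1 i) / z) / ∏ i, p.1 i : ℝ) : ℂ) with hΨdef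
  have contSum : Continuous fun p : (Fin n → ℝ) × ℝ => ∑ i, p.1 i :=
    continuous_finset_sum _ fun i _ => (continuous_apply i).comp continuous_fst
  have contProd : Continuous fun p : (Fin n → ℝ) × ℝ => ∏ i, p.1 i :=
    continuous_finset_prod _ fun i _ => (continuous_apply i).comp continuous_fst
  -- continuity on the domain
  have hcont : ContinuousOn Ψ (P ×ˢ Ioi (0:ℝ)) := by
    intro p hp
    rw [Set.mem_prod] at hp
    obtain ⟨hp1, hp2'⟩ := hp
    have hp2 : (0:ℝ) < p.2 := hp2'
    have hx : ∀ i, 0 < p.1 i := fun i => hp1 i (Set.mem_univ i)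
    have hPx : 0 < ∏ i, p.1 i := Finset.prod_pos fun i _ => hx i
    apply ContinuousAt.continuousWithinAt
    have c1 : ContinuousAt (fun p : (Fin n → ℝ) × ℝ => ((p.2 : ℂ)) ^ (s - 1)) p := by
      have h1 : ContinuousAt (fun w : ℂ => w ^ (s - 1)) ((p.2 : ℝ) : ℂ) :=
        continuousAt_cpow_const (Complex.ofReal_mem_slitPlane.2 hp2)
      have h2 : ContinuousAt (fun p : (Fin n → ℝ) × ℝ => ((p.2 : ℝ) : ℂ)) p :=
        Complex.continuous_ofReal.continuousAt.comp continuousAt_snd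
      exact ContinuousAt.comp (f := fun p : (Fin n → ℝ) × ℝ => ((p.2 : ℝ) : ℂ)) h1 h2
    have c3 : ContinuousAt
        (fun p : (Fin n → ℝ) × ℝ => -(∑ i, p.1 i + p.2 / ∏ i, p.1 i) / z) p := by
      exact (((contSum.continuousAt).add
        ((continuous_snd.continuousAt).div contProd.continuousAt hPx.ne')).neg).div_const z
    have c2' : ContinuousAt
        (fun p : (Fin n → ℝ) × ℝ =>
          Real.exp (-(∑ i, p.1 i + p.2 / ∏ i, p.1 i) / z) / ∏ i, p.1 i) p := by
      exact ((Real.continuous_exp.continuousAt.comp c3).div contProd.continuousAt hPx.ne')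
    have c2 : ContinuousAt (fun p : (Fin n → ℝ) × ℝ =>
        ((Real.exp (-(∑ i, p.1 i + p.2 / ∏ i, p.1 i) / z) / ∏ i, p.1 i : ℝ) : ℂ)) p :=
      Complex.continuous_ofReal.continuousAt.comp c2'
    exact c1.mul c2
  have hAESM : AEStronglyMeasurable Ψ (μP.prod μq) := by
    rw [hμP, hμq, Measure.prod_restrict]
    exact hcont.aestronglyMeasurable (hPm.prod measurableSet_Ioi)
  -- slice analysis for x in P
  have slice : ∀ x : Fin n → ℝ, (∀ i, 0 < x i) → ∀ q : ℝ,
      Ψ (x, q) = ((Real.exp (-(∑ i, x i) / z) / ∏ i, x i : ℝ) : ℂ) *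
        ((q : ℂ) ^ (s - 1) *
          Complex.exp (-((((z * ∏ i, x i)⁻¹ : ℝ) : ℂ) * (q : ℂ)))) := by
    intro x hx q
    have hPx : 0 < ∏ i, x i := Finset.prod_pos fun i _ => hx i
    have e1 : -(∑ i, x i + q / ∏ i, x i) / z
        = -(∑ i, x i) / z + -((z * ∏ i, x i)⁻¹ * q) := by
      field_simp
      ring
    rw [hΨdef]
    simp only []
    rw [e1, Real.exp_add]
    push_cast
    ring
  -- norm of slice for x in P, q > 0
  have sliceR : ∀ x : Fin n → ℝ, (∀ i, 0 < x i) → ∀ q ∈ Ioi (0:ℝ),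
      ‖Ψ (x, q)‖ = (Real.exp (-(∑ i, x i) / z) / ∏ i, x i) *
        (q ^ (σ - 1) * Real.exp (-((z * ∏ i, x i)⁻¹ * q))) := by
    intro x hx q hq
    have hq : (0:ℝ) < q := hq
    have hPx : 0 < ∏ i, x i := Finset.prod_pos fun i _ => hx i
    rw [slice x hx q]
    rw [norm_mul, norm_mul,
      Complex.norm_cpow_eq_rpow_re_of_pos hq, Complex.norm_real, Real.norm_eq_abs, Complex.norm_exp]
    have h1 : (s - 1).re = σ - 1 := by simp [hσdef]
    have h2 : (-((((z * ∏ i, x i)⁻¹ : ℝ) : ℂ) * (q : ℂ))).re = -((z * ∏ i, x i)⁻¹ * q) := by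
      rw [← Complex.ofReal_mul, ← Complex.ofReal_neg, Complex.ofReal_re]
    rw [h1, h2, abs_of_nonneg (by positivity)]
  set gg : ℝ → ℂ := fun t => (t : ℂ) ^ (s - 1) * Complex.exp (-(((z⁻¹ : ℝ) : ℂ) * (t : ℂ)))
    with hgg
  have hggint : ∫ t in Ioi (0:ℝ), gg t = ((z : ℝ) : ℂ) ^ s * Complex.Gamma s := by
    rw [hgg]
    rw [setIntegral_cpow_mul_exp_neg_mul hs (inv_pos.mpr hz), inv_inv]
  -- value of the inner complex integral
  have hVal : ∀ x ∈ P, (∫ q, Ψ (x, q) ∂μq)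
      = ((z : ℝ) : ℂ) ^ s * Complex.Gamma s * ∏ i, gg (x i) := by
    intro x hxP
    have hx : ∀ i, 0 < x i := fun i => hxP i (Set.mem_univ i)
    have hPx : 0 < ∏ i, x i := Finset.prod_pos fun i _ => hx i
    have hzP : (0:ℝ) < z * ∏ i, x i := by positivity
    have hr : 0 < (z * ∏ i, x i)⁻¹ := inv_pos.mpr hzP
    have step1 : (∫ q, Ψ (x, q) ∂μq)
        = ((Real.exp (-(∑ i, x i) / z) / ∏ i, x i : ℝ) : ℂ) *
            (((z * ∏ i, x i : ℝ) : ℂ) ^ s * Complex.Gamma s) := by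
      rw [hμq, integral_congr_ae (Filter.Eventually.of_forall fun q => slice x hx q),
        integral_const_mul, setIntegral_cpow_mul_exp_neg_mul hs hr, inv_inv]
    rw [step1]
    have h4 : Real.exp (-(∑ i, x i) / z) = ∏ i, Real.exp (-(z⁻¹ * x i)) := by
      rw [← Real.exp_sum]
      congr 1
      rw [Finset.sum_neg_distrib, ← Finset.mul_sum]
      field_simp
    have h3 : ((∏ i, x i : ℝ) : ℂ) ^ (s - 1) = ∏ i, ((x i : ℝ) : ℂ) ^ (s - 1) :=
      prod_ofReal_cpow Finset.univ x (fun i _ => (hx i).le) (s - 1)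
    have h2 : ((∏ i, x i : ℝ) : ℂ) ^ s
        = ((∏ i, x i : ℝ) : ℂ) ^ (s - 1) * ((∏ i, x i : ℝ) : ℂ) := by
      rw [Complex.cpow_sub _ _ (by exact_mod_cast hPx.ne'), Complex.cpow_one]
      rw [div_mul_cancel₀]
      exact_mod_cast hPx.ne'
    have h1 : ((z * ∏ i, x i : ℝ) : ℂ) ^ s = ((z:ℝ):ℂ) ^ s * ((∏ i, x i : ℝ) : ℂ) ^ s := by
      rw [Complex.ofReal_mul, Complex.mul_cpow_ofReal_nonneg hz.le hPx.le]
    have h5 : ∏ i, gg (x i)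
        = (∏ i, ((x i : ℝ) : ℂ) ^ (s - 1)) * ((Real.exp (-(∑ i, x i) / z) : ℝ) : ℂ) := by
      rw [hgg, Finset.prod_mul_distrib, h4]
      push_cast
      ring
    rw [h1, h2, h3, h5, h4]
    push_cast
    have hPxC : (∏ i, ((x i : ℝ) : ℂ)) ≠ 0 := by
      rw [Finset.prod_ne_zero_iff]
      exact fun i _ => Complex.ofReal_ne_zero.mpr (hx i).ne'
    field_simp
  -- value of the inner norm integral
  have hValR : ∀ x ∈ P, (∫ q, ‖Ψ (x, q)‖ ∂μq)
      = z ^ σ * Real.Gamma σ * ∏ i, ((x i) ^ (σ - 1) * Real.exp (-(z⁻¹ * x i))) := by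
    intro x hxP
    have hx : ∀ i, 0 < x i := fun i => hxP i (Set.mem_univ i)
    have hPx : 0 < ∏ i, x i := Finset.prod_pos fun i _ => hx i
    have hzP : (0:ℝ) < z * ∏ i, x i := by positivity
    have hr : 0 < (z * ∏ i, x i)⁻¹ := inv_pos.mpr hzP
    have step1 : (∫ q, ‖Ψ (x, q)‖ ∂μq)
        = (Real.exp (-(∑ i, x i) / z) / ∏ i, x i) *
            ((z * ∏ i, x i) ^ σ * Real.Gamma σ) := by
      rw [hμq, setIntegral_congr_fun measurableSet_Ioi (fun q hq => sliceR x hx q hq),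
        integral_const_mul, setIntegral_rpow_mul_exp_neg_mul hσ hr, inv_inv]
    rw [step1]
    have h4 : Real.exp (-(∑ i, x i) / z) = ∏ i, Real.exp (-(z⁻¹ * x i)) := by
      rw [← Real.exp_sum]
      congr 1
      rw [Finset.sum_neg_distrib, ← Finset.mul_sum]
      field_simp
    have h3 : (∏ i, x i) ^ (σ - 1) = ∏ i, (x i) ^ (σ - 1) :=
      (Real.finset_prod_rpow Finset.univ x (fun i _ => (hx i).le) (σ - 1)).symm
    have h2 : (∏ i, x i) ^ σ = (∏ i, x i) ^ (σ - 1) * (∏ i, x i) := by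
      rw [Real.rpow_sub hPx, Real.rpow_one, div_mul_cancel₀ _ hPx.ne']
    have h1 : (z * ∏ i, x i) ^ σ = z ^ σ * (∏ i, x i) ^ σ := Real.mul_rpow hz.le hPx.le
    rw [h1, h2, h3, Finset.prod_mul_distrib, ← h4]
    field_simp
  -- integrability on the product
  have hInt : Integrable Ψ (μP.prod μq) := by
    rw [integrable_prod_iff hAESM]
    constructor
    · filter_upwards [ae_restrict_mem hPm] with x hxP
      have hx : ∀ i, 0 < x i := fun i => hxP i (Set.mem_univ i)
      have hPx : 0 < ∏ i, x i := Finset.prod_pos fun i _ => hx i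
      have hzP : (0:ℝ) < z * ∏ i, x i := by positivity
      have hr : 0 < (z * ∏ i, x i)⁻¹ := inv_pos.mpr hzP
      have base := (integrableOn_cpow_mul_exp_neg_mul hs hr).const_mul
        ((Real.exp (-(∑ i, x i) / z) / ∏ i, x i : ℝ) : ℂ)
      exact base.congr (Filter.Eventually.of_forall fun q => (slice x hx q).symm)
    · have base := (integrableOn_pi_prod (n := n)
        (fun t : ℝ => t ^ (σ - 1) * Real.exp (-(z⁻¹ * t)))
        (integrableOn_rpow_mul_exp_neg_mul hσ (inv_pos.mpr hz))).const_mul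
          (z ^ σ * Real.Gamma σ)
      exact IntegrableOn.congr_fun base (fun x hxP => (hValR x hxP).symm) hPm
  -- relating the mellin integrand to the double integral
  have cast_eq : ∀ q : ℝ,
      (q : ℂ) ^ (s - 1) • ((mirrorOscIntegral n z q : ℝ) : ℂ) = ∫ x, Ψ (x, q) ∂μP := by
    intro q
    rw [smul_eq_mul, mirrorOscIntegral]
    rw [show (∫ x, Ψ (x, q) ∂μP) = ∫ x in P,
        ((q : ℂ) ^ (s - 1) *
          ((Real.exp (-(∑ i, x i + q / ∏ i, x i) / z) / ∏ i, x i : ℝ) : ℂ)) from rfl,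
      integral_const_mul]
    congr 1
    exact integral_ofReal.symm
  have hconv : MellinConvergent (fun q : ℝ => ((mirrorOscIntegral n z q : ℝ) : ℂ)) s := by
    have h1 : Integrable (fun q => ∫ x, Ψ (x, q) ∂μP) μq := hInt.integral_prod_right
    exact h1.congr (Filter.Eventually.of_forall fun q => (cast_eq q).symm)
  refine ⟨hconv, ?_⟩
  have hswap : (∫ q, (∫ x, Ψ (x, q) ∂μP) ∂μq) = ∫ x, (∫ q, Ψ (x, q) ∂μq) ∂μP :=
    (integral_integral_swap (f := fun x q => Ψ (x, q)) hInt).symm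
  calc mellin (fun q : ℝ => ((mirrorOscIntegral n z q : ℝ) : ℂ)) s
      = ∫ q, (∫ x, Ψ (x, q) ∂μP) ∂μq := by
        rw [mellin]
        exact integral_congr_ae (Filter.Eventually.of_forall fun q => cast_eq q)
    _ = ∫ x, (∫ q, Ψ (x, q) ∂μq) ∂μP := hswap
    _ = ∫ x in P, (((z : ℝ) : ℂ) ^ s * Complex.Gamma s * ∏ i, gg (x i)) :=
        setIntegral_congr_fun hPm fun x hx => hVal x hx
    _ = ((z : ℝ) : ℂ) ^ s * Complex.Gamma s * ∫ x in P, ∏ i, gg (x i) :=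
        integral_const_mul _ _
    _ = ((z : ℝ) : ℂ) ^ s * Complex.Gamma s * (((z : ℝ) : ℂ) ^ s * Complex.Gamma s) ^ n := by
        rw [setIntegral_pi_prod, hggint]
    _ = Complex.exp (((n : ℂ) + 1) * s * (Real.log z : ℂ)) * Complex.Gamma s ^ (n + 1) := by
        have hzc : ((z : ℝ) : ℂ) ^ s = Complex.exp (s * (Real.log z : ℂ)) := by
          rw [Complex.cpow_def_of_ne_zero (Complex.ofReal_ne_zero.mpr hz.ne'),
            ← Complex.ofReal_log hz.le, mul_comm]
        rw [hzc, mul_pow, ← Complex.exp_nat_mul,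
          show ((n : ℂ) + 1) * s * (Real.log z : ℂ)
            = s * (Real.log z : ℂ) + n * (s * (Real.log z : ℂ)) by ring,
          Complex.exp_add]
        ring


lemma exp_div_le {a u : ℝ} (ha : 0 < a) (hu : 0 < u) : Real.exp (-(a / u)) / u ≤ 1 / a := by
  have h2 : a / u ≤ Real.exp (a / u) := by
    have := Real.add_one_le_exp (a / u)
    nlinarith [div_pos ha hu]
  have h1 : a ≤ u * Real.exp (a / u) := by
    calc a = u * (a / u) := by field_simp
    _ ≤ u * Real.exp (a / u) := mul_le_mul_of_nonneg_left h2 hu.le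
  calc Real.exp (-(a / u)) / u = 1 / (u * Real.exp (a / u)) := by
        rw [Real.exp_neg]
        rw [one_div, mul_inv]
        ring
    _ ≤ 1 / a := one_div_le_one_div_of_le ha h1

lemma continuousAt_mirror (n : ℕ) {z q : ℝ} (hz : 0 < z) (hq : 0 < q) :
    ContinuousAt (fun q' : ℝ => mirrorOscIntegral n z q') q := by
  set P : Set (Fin n → ℝ) := Set.univ.pi fun _ => Ioi (0:ℝ) with hPdef
  have hPm : MeasurableSet P := MeasurableSet.univ_pi fun _ => measurableSet_Ioi
  have msum : Measurable fun x : Fin n → ℝ => ∑ i, x i :=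
    Finset.measurable_sum _ fun i _ => measurable_pi_apply i
  have mprod : Measurable fun x : Fin n → ℝ => ∏ i, x i :=
    Finset.measurable_prod _ fun i _ => measurable_pi_apply i
  have h4 : ∀ x : Fin n → ℝ, Real.exp (-(∑ i, x i) / z) = ∏ i, Real.exp (-(z⁻¹ * x i)) := by
    intro x
    rw [← Real.exp_sum]
    congr 1
    rw [Finset.sum_neg_distrib, ← Finset.mul_sum]
    field_simp
  apply continuousAt_of_dominated (bound := fun x : Fin n → ℝ =>
    Real.exp (-(∑ i, x i) / z) * (2 * z / q))
  · filter_upwards with q'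
    have : Measurable fun x : Fin n → ℝ =>
        Real.exp (-(∑ i, x i + q' / ∏ i, x i) / z) / ∏ i, x i := by
      exact ((Real.measurable_exp.comp
        (((msum.add (measurable_const.div mprod)).neg).div_const z)).div mprod)
    exact this.aestronglyMeasurable
  · have hev : ∀ᶠ q' in nhds q, q' ∈ Ioi (q / 2) :=
      isOpen_Ioi.eventually_mem (by simp [mem_Ioi]; linarith)
    filter_upwards [hev] with q' hq'
    have hq' : q / 2 < q' := hq'
    filter_upwards [ae_restrict_mem hPm] with x hxP
    have hx : ∀ i, 0 < x i := fun i => hxP i (Set.mem_univ i)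
    have hPx : 0 < ∏ i, x i := Finset.prod_pos fun i _ => hx i
    have hq'0 : 0 < q' := by linarith
    have key : Real.exp (-(∑ i, x i + q' / ∏ i, x i) / z) / ∏ i, x i
        = Real.exp (-(∑ i, x i) / z) * (Real.exp (-((q' / z) / ∏ i, x i)) / ∏ i, x i) := by
      rw [← mul_div_assoc, ← Real.exp_add]
      congr 2
      field_simp
      ring
    rw [Real.norm_eq_abs, abs_of_nonneg (by positivity), key]
    have hb1 : Real.exp (-((q' / z) / ∏ i, x i)) / ∏ i, x i ≤ 1 / (q' / z) :=
      exp_div_le (by positivity) hPx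
    have hb2 : 1 / (q' / z) ≤ 2 * z / q := by
      rw [one_div_div]
      rw [div_le_div_iff₀ hq'0 hq]
      nlinarith
    exact mul_le_mul_of_nonneg_left (hb1.trans hb2) (Real.exp_pos _).le
  · have hf : IntegrableOn (fun t : ℝ => Real.exp (-(z⁻¹ * t))) (Ioi (0:ℝ)) := by
      have := exp_neg_integrableOn_Ioi 0 (inv_pos.mpr hz)
      simpa [neg_mul] using this
    have base := (integrableOn_pi_prod (n := n) _ hf).const_mul (2 * z / q)
    refine base.congr ?_
    filter_upwards with x
    rw [h4 x]
    ring
  · filter_upwards [ae_restrict_mem hPm] with x hxP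
    have hx : ∀ i, 0 < x i := fun i => hxP i (Set.mem_univ i)
    have hPx : 0 < ∏ i, x i := Finset.prod_pos fun i _ => hx i
    exact (((Real.continuous_exp.comp
      ((((continuous_const.add (continuous_id.div_const _))).neg).div_const z)).div_const
        _)).continuousAt


end MBaux

/-- for `n ≥ 1` and `z, q, c > 0`, the Mellin–Barnes integrand is
integrable on `ℝ` and the Mellin–Barnes representation
`F_{n,z}(q) = (1/2π) ∫_ℝ q^{−(c+it)} z^{(n+1)(c+it)} Γ(c+it)^{n+1} dt` holds. -/
theorem mellinBarnes_representation (n : ℕ) (hn : 1 ≤ n) (z q c : ℝ)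
    (hz : 0 < z) (hq : 0 < q) (hc : 0 < c) :
    Integrable (mellinBarnesIntegrand n z q c) volume ∧
    (mirrorOscIntegral n z q : ℂ) =
      (1 / (2 * Real.pi) : ℝ) * ∫ t : ℝ, mellinBarnesIntegrand n z q c t := by
  set f : ℝ → ℂ := fun q : ℝ => ((mirrorOscIntegral n z q : ℝ) : ℂ) with hfdef
  have hre : ∀ t : ℝ, ((c : ℂ) + t * Complex.I).re = c := by intro t; simp
  have hmells : ∀ t : ℝ, mellin f ((c : ℂ) + t * Complex.I)
      = Complex.exp (((n : ℂ) + 1) * ((c : ℂ) + t * Complex.I) * (Real.log z : ℂ)) *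
        Complex.Gamma ((c : ℂ) + t * Complex.I) ^ (n + 1) :=
    fun t => (MBaux.mellin_mirror n hz (by rw [hre t]; exact hc)).2
  -- integrability of the Mellin–Barnes integrand
  have hint : Integrable (mellinBarnesIntegrand n z q c) volume := by
    have hcont : Continuous fun t : ℝ =>
        Complex.exp (-((c : ℂ) + t * Complex.I) * (Real.log q : ℂ)) *
          Complex.exp (((n : ℂ) + 1) * ((c : ℂ) + t * Complex.I) * (Real.log z : ℂ)) := by
      fun_prop
    have hbd : ∀ t : ℝ, ‖Complex.exp (-((c : ℂ) + t * Complex.I) * (Real.log q : ℂ)) *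
          Complex.exp (((n : ℂ) + 1) * ((c : ℂ) + t * Complex.I) * (Real.log z : ℂ))‖
        ≤ Real.exp (-c * Real.log q) * Real.exp ((n + 1) * c * Real.log z) := by
      intro t
      rw [norm_mul, Complex.norm_exp, Complex.norm_exp]
      have h1 : (-((c : ℂ) + t * Complex.I) * (Real.log q : ℂ)).re = -c * Real.log q := by
        simp
      have h2 : ((((n : ℂ) + 1)) * ((c : ℂ) + t * Complex.I) * (Real.log z : ℂ)).re
          = (n + 1) * c * Real.log z := by simp
      rw [h1, h2]
    exact MBaux.integrable_gamma_kernel hc hn _ hcont hbd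
  refine ⟨hint, ?_⟩
  -- vertical integrability
  have hvert : Complex.VerticalIntegrable (mellin f) c := by
    have hcont2 : Continuous fun t : ℝ =>
        Complex.exp (((n : ℂ) + 1) * ((c : ℂ) + t * Complex.I) * (Real.log z : ℂ)) := by
      fun_prop
    have hb2 : ∀ t : ℝ, ‖Complex.exp (((n : ℂ) + 1) * ((c : ℂ) + t * Complex.I) *
          (Real.log z : ℂ))‖ ≤ Real.exp ((n + 1) * c * Real.log z) := by
      intro t
      rw [Complex.norm_exp]
      have h2 : ((((n : ℂ) + 1)) * ((c : ℂ) + t * Complex.I) * (Real.log z : ℂ)).re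
          = (n + 1) * c * Real.log z := by simp
      rw [h2]
    exact (MBaux.integrable_gamma_kernel hc hn _ hcont2 hb2).congr
      (Filter.Eventually.of_forall fun t => (hmells t).symm)
  have hconv : MellinConvergent f (c : ℂ) :=
    (MBaux.mellin_mirror n hz (s := (c : ℂ)) (by simpa using hc)).1
  have hfcont : ContinuousAt f q := by
    have h1 := MBaux.continuousAt_mirror n hz hq
    exact ContinuousAt.comp (f := fun q' : ℝ => mirrorOscIntegral n z q')
      Complex.continuous_ofReal.continuousAt h1
  have hinv := mellinInv_mellin_eq c f hq hconv hvert hfcont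
  rw [show (mirrorOscIntegral n z q : ℂ) = f q from rfl, ← hinv, mellinInv, Complex.real_smul]
  congr 1
  apply integral_congr_ae
  filter_upwards with t
  have hcpow : (q : ℂ) ^ (-((c : ℂ) + t * Complex.I))
      = Complex.exp (-((c : ℂ) + t * Complex.I) * (Real.log q : ℂ)) := by
    rw [Complex.cpow_def_of_ne_zero (Complex.ofReal_ne_zero.mpr hq.ne'),
      ← Complex.ofReal_log hq.le, mul_comm]
  rw [smul_eq_mul, hmells t, hcpow, mellinBarnesIntegrand]
  ring
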